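/- Let d ∈ ℕ, d ≥ 1, and let σ and ρ be positive semidefinite d×d complex matrices. Then tr(|ρ^{1/2}σ^{1/2}|) equals the supremum of |tr(x)| over all d×d complex matrices x for which the 2d×2d block matrix [[σ, x], [x*, ρ]] is positive semidefinite. -/

import Mathlib

open scoped ComplexOrder
open Matrix

open scoped Classical in
/-- The positive semidefinite square root of a positive semidefinite matrix
(junk value `0` if the matrix is not positive semidefinite). -/
noncomputable def matSqrt {d : ℕ} (M : Matrix (Fin d) (Fin d) ℂ) : Matrix (Fin d) (Fin d) ℂ :=
  if h : M.PosSemidef then (h.1.eigenvectorUnitary.1 * diagonal ((↑) ∘ (√·) ∘ h.1.eigenvalues) *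
    (star h.1.eigenvectorUnitary : Matrix (Fin d) (Fin d) ℂ)) else 0

/-- The absolute value `|X| = (Xᴴ X)^{1/2}` of a matrix. -/
noncomputable def matAbs {d : ℕ} (X : Matrix (Fin d) (Fin d) ℂ) : Matrix (Fin d) (Fin d) ℂ :=
  matSqrt (Xᴴ * X)

/-- The fidelity `F(σ, ρ) = tr |σ^{1/2} ρ^{1/2}|` of two matrices, as a real number. -/
noncomputable def matFid {d : ℕ} (σ ρ : Matrix (Fin d) (Fin d) ℂ) : ℝ :=
  ((matAbs (matSqrt σ * matSqrt ρ)).trace).re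

section Aux
set_option linter.unusedSectionVars false
set_option maxHeartbeats 1600000
variable {n : Type*} [Fintype n] [DecidableEq n] {m : Type*} [Fintype m] [DecidableEq m]

noncomputable def Matrix.PosSemidef.sqrt {A : Matrix n n ℂ} (hA : A.PosSemidef) : Matrix n n ℂ :=
  hA.1.eigenvectorUnitary.1 * diagonal ((↑) ∘ (√·) ∘ hA.1.eigenvalues) *
    (star hA.1.eigenvectorUnitary : Matrix n n ℂ)

lemma Matrix.PosSemidef.posSemidef_sqrt {A : Matrix n n ℂ} (hA : A.PosSemidef) :
    hA.sqrt.PosSemidef := by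
  have hD : (diagonal ((↑) ∘ (√·) ∘ hA.1.eigenvalues) : Matrix n n ℂ).PosSemidef := by
    rw [posSemidef_diagonal_iff]; intro i
    simp only [Function.comp_apply]; exact_mod_cast Real.sqrt_nonneg _
  have := hD.mul_mul_conjTranspose_same (hA.1.eigenvectorUnitary : Matrix n n ℂ)
  unfold Matrix.PosSemidef.sqrt
  rwa [Matrix.star_eq_conjTranspose]

lemma Matrix.PosSemidef.sqrt_mul_self {A : Matrix n n ℂ} (hA : A.PosSemidef) :
    hA.sqrt * hA.sqrt = A := by
  have hUU : star (hA.1.eigenvectorUnitary : Matrix n n ℂ) *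
      (hA.1.eigenvectorUnitary : Matrix n n ℂ) = 1 :=
    mem_unitaryGroup_iff'.mp hA.1.eigenvectorUnitary.2
  conv_rhs => rw [hA.1.spectral_theorem, Unitary.conjStarAlgAut_apply]
  unfold Matrix.PosSemidef.sqrt
  simp only [Matrix.mul_assoc]
  have hf : (fun i => (Complex.ofReal ∘ (fun x => √x) ∘ hA.1.eigenvalues) i *
      (Complex.ofReal ∘ (fun x => √x) ∘ hA.1.eigenvalues) i) = RCLike.ofReal ∘ hA.1.eigenvalues := by
    funext i
    simp only [Function.comp_apply]
    rw [← Complex.ofReal_mul, Real.mul_self_sqrt (hA.eigenvalues_nonneg i)]; rfl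
  rw [← Matrix.mul_assoc (star (hA.1.eigenvectorUnitary : Matrix n n ℂ)), hUU, Matrix.one_mul,
    ← Matrix.mul_assoc (diagonal _), diagonal_mul_diagonal, hf]

open scoped MatrixOrder in
lemma Matrix.PosSemidef.eq_sqrt_of_sq_eq {A B : Matrix n n ℂ} (hB : B.PosSemidef)
    (hA : A.PosSemidef) (h : B ^ 2 = A) : B = hA.sqrt := by
  have h1 : CFC.sqrt A = B :=
    (CFC.sqrt_eq_iff A B hA.nonneg hB.nonneg).mpr (by rw [← h, pow_two])
  have h2 : CFC.sqrt A = hA.sqrt :=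
    (CFC.sqrt_eq_iff A _ hA.nonneg hA.posSemidef_sqrt.nonneg).mpr hA.sqrt_mul_self
  rw [← h1, h2]


noncomputable def vnorm (v : n → ℂ) : ℝ := ‖(WithLp.equiv 2 (n → ℂ)).symm v‖

lemma enorm_nonneg' (v : n → ℂ) : 0 ≤ vnorm v := norm_nonneg _

lemma cs (v w : n → ℂ) : ‖dotProduct (star v) w‖ ≤ vnorm v * vnorm w := by
  have := norm_inner_le_norm (𝕜 := ℂ) ((WithLp.equiv 2 (n → ℂ)).symm v) ((WithLp.equiv 2 (n → ℂ)).symm w)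
  rw [show inner ℂ ((WithLp.equiv 2 (n → ℂ)).symm v) ((WithLp.equiv 2 (n → ℂ)).symm w)
    = dotProduct (star v) w from by rw [dotProduct_comm]; rfl] at this
  exact this

lemma sq_enorm (v : n → ℂ) : vnorm v ^ 2 = (dotProduct (star v) v).re := by
  have := inner_self_eq_norm_sq (𝕜 := ℂ) ((WithLp.equiv 2 (n → ℂ)).symm v)
  rw [show inner ℂ ((WithLp.equiv 2 (n → ℂ)).symm v) ((WithLp.equiv 2 (n → ℂ)).symm v)
    = dotProduct (star v) v from by rw [dotProduct_comm]; rfl] at this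
  rw [vnorm, ← this]; rfl

/-- `V` is a contraction. -/
def Ctr (V : Matrix n n ℂ) : Prop := (1 - Vᴴ * V).PosSemidef

lemma dot_conj_mul (V : Matrix n n ℂ) (v : n → ℂ) :
    dotProduct (star v) ((Vᴴ * V) *ᵥ v)
      = dotProduct (star (V *ᵥ v)) (V *ᵥ v) := by
  rw [star_mulVec, ← mulVec_mulVec, dotProduct_mulVec]

lemma Ctr.enorm_le {V : Matrix n n ℂ} (hV : Ctr V) (v : n → ℂ) :
    vnorm (V *ᵥ v) ≤ vnorm v := by
  have h := hV.dotProduct_mulVec_nonneg v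
  rw [sub_mulVec, dotProduct_sub, one_mulVec, dot_conj_mul] at h
  rw [Complex.le_def] at h
  have h2 : vnorm (V *ᵥ v) ^ 2 ≤ vnorm v ^ 2 := by
    rw [sq_enorm, sq_enorm]
    simpa using h.1
  have := Real.sqrt_le_sqrt h2
  rwa [Real.sqrt_sq (enorm_nonneg' _), Real.sqrt_sq (enorm_nonneg' _)] at this

lemma Ctr.of_enorm {V : Matrix n n ℂ} (h : ∀ v, vnorm (V *ᵥ v) ≤ vnorm v) : Ctr V := by
  apply PosSemidef.of_dotProduct_mulVec_nonneg
  · exact (isHermitian_one).sub (isHermitian_conjTranspose_mul_self V)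
  · intro v
    rw [sub_mulVec, dotProduct_sub, one_mulVec, dot_conj_mul]
    have h1 : (0:ℂ) ≤ dotProduct (star v) v := dotProduct_star_self_nonneg v
    have h2 : (0:ℂ) ≤ dotProduct (star (V *ᵥ v)) (V *ᵥ v) := dotProduct_star_self_nonneg _
    have h3 : (vnorm (V *ᵥ v))^2 ≤ (vnorm v)^2 := pow_le_pow_left₀ (enorm_nonneg' _) (h v) 2
    rw [sq_enorm, sq_enorm] at h3
    rw [Complex.le_def] at h1 h2 ⊢
    simp only [Complex.zero_re, Complex.zero_im, Complex.sub_re, Complex.sub_im] at *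
    constructor
    · linarith
    · rw [← h1.2, ← h2.2]; ring

lemma Ctr.adj {V : Matrix n n ℂ} (hV : Ctr V) : Ctr Vᴴ := by
  apply Ctr.of_enorm
  intro v
  rcases le_or_gt (vnorm (Vᴴ *ᵥ v)) 0 with h | h
  · exact h.trans (enorm_nonneg' _)
  have key : vnorm (Vᴴ *ᵥ v) * vnorm (Vᴴ *ᵥ v) ≤ vnorm v * vnorm (Vᴴ *ᵥ v) := by
    have e1 : dotProduct (star (Vᴴ *ᵥ v)) (Vᴴ *ᵥ v)
        = dotProduct (star v) (V *ᵥ (Vᴴ *ᵥ v)) := by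
      rw [← dot_conj_mul Vᴴ v, conjTranspose_conjTranspose, ← mulVec_mulVec]
    have e2 : vnorm (Vᴴ *ᵥ v) * vnorm (Vᴴ *ᵥ v) = (dotProduct (star v) (V *ᵥ (Vᴴ *ᵥ v))).re := by
      rw [← e1, ← sq_enorm, pow_two]
    rw [e2]
    calc (dotProduct (star v) (V *ᵥ (Vᴴ *ᵥ v))).re
        ≤ ‖dotProduct (star v) (V *ᵥ (Vᴴ *ᵥ v))‖ := Complex.re_le_norm _
      _ ≤ vnorm v * vnorm (V *ᵥ (Vᴴ *ᵥ v)) := cs _ _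
      _ ≤ vnorm v * vnorm (Vᴴ *ᵥ v) :=
          mul_le_mul_of_nonneg_left (hV.enorm_le _) (enorm_nonneg' _)
  exact le_of_mul_le_mul_right key h

lemma Ctr.mul {V W : Matrix n n ℂ} (hV : Ctr V) (hW : Ctr W) : Ctr (V * W) := by
  have h : 1 - (V * W)ᴴ * (V * W) = Wᴴ * (1 - Vᴴ * V) * W + (1 - Wᴴ * W) := by
    rw [conjTranspose_mul]
    noncomm_ring
  rw [Ctr, h]
  exact (hV.conjTranspose_mul_mul_same W).add hW


/-- Pseudo-polar decomposition: `M = V S` with `V` a contraction, for any psd `S`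
with `S * S = Mᴴ M`. -/
lemma pseudo_polar (M S : Matrix n n ℂ) (hS : S.PosSemidef) (hMS : Mᴴ * M = S * S) :
    ∃ V : Matrix n n ℂ, Ctr V ∧ V * S = M ∧ Vᴴ * M = S := by
  have hN : (Mᴴ * M).PosSemidef := posSemidef_conjTranspose_mul_self M
  have hSsq : S = hN.sqrt := hS.eq_sqrt_of_sq_eq hN (by rw [pow_two, hMS])
  set hH := hN.1 with hHdef
  set U : Matrix n n ℂ := (hH.eigenvectorUnitary : Matrix n n ℂ) with hUdef
  set g : n → ℝ := hH.eigenvalues with hgdef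
  have hg0 : ∀ i, 0 ≤ g i := hN.eigenvalues_nonneg
  have hUU : star U * U = 1 := mem_unitaryGroup_iff'.mp hH.eigenvectorUnitary.2
  have hUU' : U * star U = 1 := mem_unitaryGroup_iff.mp hH.eigenvectorUnitary.2
  have hspec : Mᴴ * M = U * diagonal (fun i => (g i : ℂ)) * star U := by
    have := hH.spectral_theorem
    rw [Unitary.conjStarAlgAut_apply] at this
    convert this using 2
    rfl
    rfl
  have hsq : S = U * diagonal (fun i => (Real.sqrt (g i) : ℂ)) * star U := by
    rw [hSsq]; rfl
  have mulUD : ∀ a b : n → ℂ, (U * diagonal a * star U) * (U * diagonal b * star U)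
      = U * diagonal (fun i => a i * b i) * star U := by
    intro a b
    calc (U * diagonal a * star U) * (U * diagonal b * star U)
        = U * (diagonal a * ((star U * U) * diagonal b)) * star U := by
          simp only [Matrix.mul_assoc]
      _ = U * diagonal (fun i => a i * b i) * star U := by
          rw [hUU, Matrix.one_mul, diagonal_mul_diagonal]
  set p : n → ℂ := fun i => if g i = 0 then 0 else ((Real.sqrt (g i))⁻¹ : ℂ) with hpdef
  set e : n → ℂ := fun i => if g i = 0 then 0 else 1 with hedef
  set pinv : Matrix n n ℂ := U * diagonal p * star U with hpinvdef
  have conjH : ∀ a : n → ℂ, star a = a → (U * diagonal a * star U)ᴴ = U * diagonal a * star U := by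
    intro a ha
    simp only [conjTranspose_mul, conjTranspose_conjTranspose, diagonal_conjTranspose, ha,
      Matrix.star_eq_conjTranspose, Matrix.mul_assoc]
  have hps : star p = p := by
    funext i
    simp only [hpdef, Pi.star_apply, apply_ite (star : ℂ → ℂ), star_zero,
      ← Complex.ofReal_inv, Complex.star_def, Complex.conj_ofReal]
  have hes : star (fun i => 1 - e i) = (fun i => 1 - e i) := by
    funext i
    simp only [hedef, Pi.star_apply]
    split <;> simp
  have hpinvH : pinvᴴ = pinv := conjH p hps
  set Pq : Matrix n n ℂ := U * diagonal (fun i => 1 - e i) * star U with hPqdef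
  have hPqH : Pqᴴ = Pq := conjH _ hes
  have UD0 : ∀ f : n → ℂ, (∀ i, f i = 0) → U * diagonal f * star U = 0 := by
    intro f hf
    have : f = 0 := funext hf
    rw [this]
    have hd0 : (diagonal (0 : n → ℂ) : Matrix n n ℂ) = 0 := diagonal_zero
    rw [hd0, Matrix.mul_zero, Matrix.zero_mul]
  have hsqgpos : ∀ i, g i ≠ 0 → (Real.sqrt (g i) : ℂ) ≠ 0 := by
    intro i h
    simp only [ne_eq, Complex.ofReal_eq_zero]
    exact (Real.sqrt_ne_zero' ).mpr (lt_of_le_of_ne (hg0 i) (Ne.symm h))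
  have hfe : (fun i => p i * (Real.sqrt (g i) : ℂ)) = e := by
    funext i
    by_cases h : g i = 0
    · simp [hpdef, hedef, h]
    · simp only [hpdef, hedef, if_neg h]
      exact inv_mul_cancel₀ (hsqgpos i h)
  have hfe2 : (fun i => p i * ((g i : ℝ) : ℂ)) = fun i => (Real.sqrt (g i) : ℂ) := by
    funext i
    by_cases h : g i = 0
    · simp [hpdef, h]
    · simp only [hpdef, if_neg h]
      rw [← Complex.ofReal_inv, ← Complex.ofReal_mul]
      congr 1
      rw [inv_mul_eq_div, div_eq_iff (Real.sqrt_ne_zero'.mpr (lt_of_le_of_ne (hg0 i) (Ne.symm h)))]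
      exact (Real.mul_self_sqrt (hg0 i)).symm
  have hpS : pinv * S = U * diagonal e * star U := by
    rw [hpinvdef, hsq, mulUD]
    simp only [hfe]
  have hsum : U * diagonal e * star U + Pq = 1 := by
    rw [hPqdef, ← Matrix.add_mul, ← Matrix.mul_add, diagonal_add]
    have h1 : (diagonal (fun i => e i + (1 - e i)) : Matrix n n ℂ) = 1 := by
      rw [← diagonal_one]
      congr 1
      funext i
      ring
    rw [h1, Matrix.mul_one, hUU']
  have hMPq : M * Pq = 0 := by
    rw [← conjTranspose_mul_self_eq_zero]
    have h1 : (M * Pq)ᴴ * (M * Pq) = (Pq * (Mᴴ * M)) * Pq := by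
      simp only [conjTranspose_mul, hPqH, Matrix.mul_assoc]
    rw [h1, hspec, hPqdef, mulUD, mulUD]
    apply UD0
    intro i
    by_cases h : g i = 0 <;> simp [hedef, h]
  have hVS : (M * pinv) * S = M := by
    calc M * pinv * S = M * (pinv * S) := by rw [Matrix.mul_assoc]
      _ = M * (1 - Pq) := by rw [hpS, eq_sub_of_add_eq hsum]
      _ = M := by rw [Matrix.mul_sub, Matrix.mul_one, hMPq, sub_zero]
  have hVM : (M * pinv)ᴴ * M = S := by
    have h1 : (M * pinv)ᴴ * M = pinv * (Mᴴ * M) := by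
      simp only [conjTranspose_mul, hpinvH, Matrix.mul_assoc]
    rw [h1, hspec, hpinvdef, mulUD]
    simp only [hfe2, ← hsq]
  refine ⟨M * pinv, ?_, hVS, hVM⟩
  -- contraction property
  have hVV : (M * pinv)ᴴ * (M * pinv) = U * diagonal e * star U := by
    have h1 : (M * pinv)ᴴ * (M * pinv) = ((M * pinv)ᴴ * M) * pinv := by
      rw [Matrix.mul_assoc]
    rw [h1, hVM, hsq, hpinvdef, mulUD]
    have : (fun i => (Real.sqrt (g i) : ℂ) * p i) = e := by
      funext i
      rw [mul_comm]
      exact congrFun hfe i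
    simp only [this]
  have hone : (1 : Matrix n n ℂ) = U * diagonal (fun _ => (1:ℂ)) * star U := by
    rw [← diagonal_one]
    have : (diagonal (fun _ => (1:ℂ)) : Matrix n n ℂ) = 1 := diagonal_one
    rw [this, Matrix.mul_one, hUU']
  rw [Ctr, hVV]
  have hsub : 1 - U * diagonal e * star U = U * diagonal (fun i => 1 - e i) * star U := by
    rw [hone, ← Matrix.sub_mul, ← Matrix.mul_sub]
    congr 2
    rw [diagonal_sub]
  rw [hsub]
  have hdiag : (diagonal (fun i => 1 - e i) : Matrix n n ℂ).PosSemidef := by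
    rw [posSemidef_diagonal_iff]
    intro i
    by_cases h : g i = 0 <;> simp [hedef, h]
  have := hdiag.mul_mul_conjTranspose_same U
  rwa [Matrix.star_eq_conjTranspose]


lemma psd_diag_nonneg {S : Matrix n n ℂ} (hS : S.PosSemidef) (i : n) : 0 ≤ S i i := by
  have h := hS.dotProduct_mulVec_nonneg (Pi.single i 1)
  have h1 : star (Pi.single i (1:ℂ) : n → ℂ) = (Pi.single i (1:ℂ) : n → ℂ) := by
    funext j; rcases eq_or_ne j i with h|h <;> simp [h, Pi.single_apply]
  rw [h1, single_dotProduct, mulVec_single, one_mul] at h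
  simpa using h

lemma psd_trace_nonneg {S : Matrix n n ℂ} (hS : S.PosSemidef) : 0 ≤ S.trace :=
  Finset.sum_nonneg fun i _ => psd_diag_nonneg hS i

lemma abs_of_cnonneg {z : ℂ} (hz : 0 ≤ z) : ‖z‖ = z.re := by
  rw [Complex.le_def] at hz
  simp only [Complex.zero_re, Complex.zero_im] at hz
  rw [Complex.norm_def, Complex.normSq_apply, ← hz.2]
  simp only [mul_zero, add_zero]
  rw [← pow_two, Real.sqrt_sq hz.1]

/-- key trace inequality: `|tr(K S)| ≤ tr S` for a contraction `K` and psd `S`. -/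
lemma abs_trace_mul_psd_le {K S : Matrix n n ℂ} (hK : Ctr K) (hS : S.PosSemidef) :
    ‖(K * S).trace‖ ≤ S.trace.re := by
  obtain ⟨R, hRpsd, hRS⟩ : ∃ R : Matrix n n ℂ, R.PosSemidef ∧ R * R = S :=
    ⟨hS.sqrt, hS.posSemidef_sqrt, hS.sqrt_mul_self⟩
  have hRh : R.IsHermitian := hRpsd.1
  have htr : (K * S).trace = (R * (K * R)).trace := by
    rw [← hRS, ← Matrix.mul_assoc, trace_mul_comm]
  have hdiag : ∀ i, (R * (K * R)) i i
      = dotProduct (star (fun j => R j i)) (K *ᵥ (fun j => R j i)) := by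
    intro i
    simp only [Matrix.mul_apply, dotProduct, Pi.star_apply, Matrix.mulVec]
    refine Finset.sum_congr rfl fun j _ => ?_
    rw [← hRh.apply i j]
  have hdiag2 : ∀ i, dotProduct (star (fun j => R j i)) (fun j => R j i) = S i i := by
    intro i
    rw [← hRS]
    simp only [Matrix.mul_apply, dotProduct, Pi.star_apply]
    refine Finset.sum_congr rfl fun j _ => ?_
    rw [← hRh.apply i j]
  calc ‖(K * S).trace‖
      ≤ ∑ i, ‖(R * (K * R)) i i‖ := by
        rw [htr, Matrix.trace]
        exact (norm_sum_le _ _)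
    _ ≤ ∑ i, vnorm (fun j => R j i) ^ 2 := by
        refine Finset.sum_le_sum fun i _ => ?_
        rw [hdiag i, pow_two]
        calc ‖dotProduct (star (fun j => R j i)) (K *ᵥ (fun j => R j i))‖
            ≤ vnorm (fun j => R j i) * vnorm (K *ᵥ (fun j => R j i)) := cs _ _
          _ ≤ vnorm (fun j => R j i) * vnorm (fun j => R j i) :=
              mul_le_mul_of_nonneg_left (hK.enorm_le _) (enorm_nonneg' _)
    _ = S.trace.re := by
        rw [Matrix.trace, Complex.re_sum]
        refine Finset.sum_congr rfl fun i _ => ?_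
        rw [sq_enorm, hdiag2 i]
        rfl


lemma trace_fromBlocks' (a : Matrix n n ℂ) (b : Matrix n m ℂ) (c : Matrix m n ℂ) (d : Matrix m m ℂ) :
    (fromBlocks a b c d).trace = a.trace + d.trace := by
  simp [Matrix.trace, Fintype.sum_sum_type, Matrix.diag]

lemma psd_fromBlocks_diag {A : Matrix n n ℂ} {B : Matrix m m ℂ}
    (hA : A.PosSemidef) (hB : B.PosSemidef) : (fromBlocks A 0 0 B).PosSemidef := by
  have h := posSemidef_conjTranspose_mul_self (fromBlocks hA.sqrt 0 0 hB.sqrt)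
  have he : (fromBlocks hA.sqrt 0 0 hB.sqrt)ᴴ * (fromBlocks hA.sqrt 0 0 hB.sqrt)
      = fromBlocks A 0 0 B := by
    rw [fromBlocks_conjTranspose]
    simp [fromBlocks_multiply, hA.posSemidef_sqrt.1.eq, hB.posSemidef_sqrt.1.eq,
      hA.sqrt_mul_self, hB.sqrt_mul_self]
  rwa [he] at h


theorem main_aux
    (d : ℕ)
    (σ ρ : Matrix (Fin d) (Fin d) ℂ) (hσ : σ.PosSemidef) (hρ : ρ.PosSemidef) :
    ((matAbs (matSqrt ρ * matSqrt σ)).trace).re =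
      sSup {t : ℝ | ∃ x : Matrix (Fin d) (Fin d) ℂ,
        (Matrix.fromBlocks σ x xᴴ ρ).PosSemidef ∧ t = ‖x.trace‖} := by
  classical
  have hAσ : matSqrt σ = hσ.sqrt := dif_pos hσ
  have hBρ : matSqrt ρ = hρ.sqrt := dif_pos hρ
  set A : Matrix (Fin d) (Fin d) ℂ := hσ.sqrt with hAdef
  set B : Matrix (Fin d) (Fin d) ℂ := hρ.sqrt with hBdef
  have hAh : Aᴴ = A := hσ.posSemidef_sqrt.1
  have hBh : Bᴴ = B := hρ.posSemidef_sqrt.1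
  have hAA : A * A = σ := hσ.sqrt_mul_self
  have hBB : B * B = ρ := hρ.sqrt_mul_self
  set M : Matrix (Fin d) (Fin d) ℂ := B * A with hMdef
  have hN : (Mᴴ * M).PosSemidef := posSemidef_conjTranspose_mul_self M
  set S : Matrix (Fin d) (Fin d) ℂ := hN.sqrt with hSdef
  have hSpsd : S.PosSemidef := hN.posSemidef_sqrt
  have hSS : S * S = Mᴴ * M := hN.sqrt_mul_self
  have hLHS : matAbs (matSqrt ρ * matSqrt σ) = S := by
    rw [matAbs, hAσ, hBρ, matSqrt, dif_pos hN]
    rfl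
  rw [hLHS]
  set F : ℝ := S.trace.re with hFdef
  set TT : Set ℝ := {t : ℝ | ∃ x : Matrix (Fin d) (Fin d) ℂ,
      (Matrix.fromBlocks σ x xᴴ ρ).PosSemidef ∧ t = ‖x.trace‖} with hTTdef
  -- Part 1 : attainment
  obtain ⟨V, hVc, hVS, hVM⟩ := pseudo_polar M S hSpsd hSS.symm
  have hmem : F ∈ TT := by
    refine ⟨A * Vᴴ * B, ?_, ?_⟩
    · -- block matrix is PSD
      have hx0H : (A * Vᴴ * B)ᴴ = B * (V * A) := by
        simp only [conjTranspose_mul, conjTranspose_conjTranspose, hAh, hBh, Matrix.mul_assoc]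
      set L : Matrix (Fin d ⊕ Fin d) (Fin d ⊕ Fin d) ℂ := fromBlocks (V * A) B 0 0 with hLdef
      have hL : Lᴴ * L = fromBlocks (A * Vᴴ * (V * A)) (A * Vᴴ * B) (B * (V * A)) (B * B) := by
        rw [hLdef, fromBlocks_conjTranspose, fromBlocks_multiply]
        simp only [conjTranspose_mul, conjTranspose_zero, hAh, hBh, Matrix.mul_zero,
          Matrix.zero_mul, add_zero, zero_add, Matrix.mul_assoc]
      have hblk : (1 - Vᴴ * V).PosSemidef := hVc
      have hAVA : (A * (1 - Vᴴ * V) * A).PosSemidef := by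
        have := hblk.mul_mul_conjTranspose_same A
        rwa [hAh] at this
      have hdecomp : Matrix.fromBlocks σ (A * Vᴴ * B) (A * Vᴴ * B)ᴴ ρ
          = Lᴴ * L + Matrix.fromBlocks (A * (1 - Vᴴ * V) * A) 0 0 0 := by
        rw [hL, hx0H, fromBlocks_add]
        have h11 : σ = A * Vᴴ * (V * A) + A * (1 - Vᴴ * V) * A := by
          rw [← hAA]; noncomm_ring
        have h22 : ρ = B * B + 0 := by rw [← hBB, add_zero]
        rw [← h11, ← h22, add_zero, add_zero]
      rw [hdecomp]
      exact (posSemidef_conjTranspose_mul_self L).add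
        (psd_fromBlocks_diag hAVA Matrix.PosSemidef.zero)
    · -- the trace value
      have htr0 : (A * Vᴴ * B).trace = S.trace := by
        rw [trace_mul_comm, ← Matrix.mul_assoc, ← hMdef, trace_mul_comm, hVM]
      rw [htr0, abs_of_cnonneg (psd_trace_nonneg hSpsd)]
  -- Part 2 : upper bound
  have hub : ∀ t ∈ TT, t ≤ F := by
    rintro t ⟨x, hx, rfl⟩
    set T : Matrix (Fin d ⊕ Fin d) (Fin d ⊕ Fin d) ℂ := hx.sqrt with hTdef
    have hTh : Tᴴ = T := hx.posSemidef_sqrt.1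
    have hTT2 : T * T = Matrix.fromBlocks σ x xᴴ ρ := hx.sqrt_mul_self
    set J1 : Matrix (Fin d ⊕ Fin d) (Fin d ⊕ Fin d) ℂ := fromBlocks 1 0 0 0 with hJ1def
    set J2 : Matrix (Fin d ⊕ Fin d) (Fin d ⊕ Fin d) ℂ := fromBlocks 0 0 0 1 with hJ2def
    set Z : Matrix (Fin d ⊕ Fin d) (Fin d ⊕ Fin d) ℂ := fromBlocks 0 0 1 0 with hZdef
    have hJ1H : J1ᴴ = J1 := by
      rw [hJ1def, fromBlocks_conjTranspose]; simp
    have hJ2H : J2ᴴ = J2 := by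
      rw [hJ2def, fromBlocks_conjTranspose]; simp
    set P : Matrix (Fin d ⊕ Fin d) (Fin d ⊕ Fin d) ℂ := T * J1 with hPdef
    set Q : Matrix (Fin d ⊕ Fin d) (Fin d ⊕ Fin d) ℂ := T * J2 with hQdef
    have hPP : Pᴴ * P = fromBlocks σ 0 0 0 := by
      have h1 : Pᴴ * P = J1 * (T * T) * J1 := by
        rw [hPdef, conjTranspose_mul, hJ1H, hTh]
        simp only [Matrix.mul_assoc]
      rw [h1, hTT2, hJ1def, fromBlocks_multiply, fromBlocks_multiply]
      simp [fromBlocks_multiply]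
    have hQQ : Qᴴ * Q = fromBlocks 0 0 0 ρ := by
      have h1 : Qᴴ * Q = J2 * (T * T) * J2 := by
        rw [hQdef, conjTranspose_mul, hJ2H, hTh]
        simp only [Matrix.mul_assoc]
      rw [h1, hTT2, hJ2def, fromBlocks_multiply, fromBlocks_multiply]
      simp [fromBlocks_multiply]
    have hPQ : Pᴴ * Q = fromBlocks 0 x 0 0 := by
      have h1 : Pᴴ * Q = J1 * (T * T) * J2 := by
        rw [hPdef, hQdef, conjTranspose_mul, hJ1H, hTh]
        simp only [Matrix.mul_assoc]
      rw [h1, hTT2, hJ1def, hJ2def, fromBlocks_multiply, fromBlocks_multiply]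
      simp [fromBlocks_multiply]
    set Sp : Matrix (Fin d ⊕ Fin d) (Fin d ⊕ Fin d) ℂ := fromBlocks A 0 0 0 with hSpdef
    set Sq : Matrix (Fin d ⊕ Fin d) (Fin d ⊕ Fin d) ℂ := fromBlocks 0 0 0 B with hSqdef
    have hSpPsd : Sp.PosSemidef := psd_fromBlocks_diag hσ.posSemidef_sqrt Matrix.PosSemidef.zero
    have hSqPsd : Sq.PosSemidef := psd_fromBlocks_diag Matrix.PosSemidef.zero hρ.posSemidef_sqrt
    have hSpH : Spᴴ = Sp := hSpPsd.1
    obtain ⟨Vp, hVpC, hVpS, -⟩ := pseudo_polar P Sp hSpPsd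
      (by rw [hPP, hSpdef, fromBlocks_multiply]; simp [hAA])
    obtain ⟨Wq, hWqC, hWqS, -⟩ := pseudo_polar Q Sq hSqPsd
      (by rw [hQQ, hSqdef, fromBlocks_multiply]; simp [hBB])
    -- the trace identity
    set G : Matrix (Fin d ⊕ Fin d) (Fin d ⊕ Fin d) ℂ := Sq * Z * Sp with hGdef
    have hG : G = fromBlocks 0 0 (B * A) 0 := by
      rw [hGdef, hSqdef, hZdef, hSpdef, fromBlocks_multiply, fromBlocks_multiply]
      simp
    have htrx : x.trace = ((Vpᴴ * Wq) * G).trace := by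
      have e0 : (fromBlocks x 0 0 (0 : Matrix (Fin d) (Fin d) ℂ)).trace = x.trace := by
        rw [trace_fromBlocks', trace_zero, add_zero]
      have e1 : Pᴴ * Q * Z = fromBlocks x 0 0 0 := by
        rw [hPQ, hZdef, fromBlocks_multiply]
        simp
      have e2 : Pᴴ * Q * Z = Sp * (Vpᴴ * (Wq * (Sq * Z))) := by
        rw [← hVpS, ← hWqS, conjTranspose_mul, hSpH]
        simp only [Matrix.mul_assoc]
      have e3 : (Sp * (Vpᴴ * (Wq * (Sq * Z)))).trace = ((Vpᴴ * Wq) * G).trace := by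
        rw [trace_mul_comm, hGdef]
        congr 1
        simp only [Matrix.mul_assoc]
      rw [← e0, ← e1, e2, e3]
    set S0 : Matrix (Fin d ⊕ Fin d) (Fin d ⊕ Fin d) ℂ := fromBlocks S 0 0 0 with hS0def
    have hS0psd : S0.PosSemidef := psd_fromBlocks_diag hSpsd Matrix.PosSemidef.zero
    have hGG : Gᴴ * G = S0 * S0 := by
      rw [hG, hS0def, fromBlocks_conjTranspose, fromBlocks_multiply, fromBlocks_multiply]
      simp only [conjTranspose_zero, Matrix.mul_zero, Matrix.zero_mul, add_zero, zero_add, hSS]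
      rfl
    obtain ⟨V0, hV0C, hV0S, -⟩ := pseudo_polar G S0 hS0psd hGG
    have hKC : Ctr ((Vpᴴ * Wq) * V0) := ((hVpC.adj).mul hWqC).mul hV0C
    have hfin : ‖x.trace‖ ≤ S0.trace.re := by
      rw [htrx, ← hV0S, ← Matrix.mul_assoc]
      exact abs_trace_mul_psd_le hKC hS0psd
    have hS0tr : S0.trace.re = F := by
      rw [hS0def, trace_fromBlocks', trace_zero, add_zero]
    rwa [hS0tr] at hfin
  have h1 : F ≤ sSup TT := le_csSup ⟨F, hub⟩ hmem
  have h2 : sSup TT ≤ F := csSup_le ⟨F, hmem⟩ hub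
  exact le_antisymm h1 h2


/-- for positive semidefinite `σ, ρ`, `tr |ρ^{1/2} σ^{1/2}|` is the supremum of
`|tr x|` over all `x` for which the block matrix `[[σ, x], [xᴴ, ρ]]` is positive
semidefinite. -/
theorem trace_abs_eq_sSup_block
    (d : ℕ) (hd : 1 ≤ d)
    (σ ρ : Matrix (Fin d) (Fin d) ℂ) (hσ : σ.PosSemidef) (hρ : ρ.PosSemidef) :
    ((matAbs (matSqrt ρ * matSqrt σ)).trace).re =
      sSup {t : ℝ | ∃ x : Matrix (Fin d) (Fin d) ℂ,
        (Matrix.fromBlocks σ x xᴴ ρ).PosSemidef ∧ t = ‖x.trace‖} :=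
  main_aux d σ ρ hσ hρ

end Aux
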